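/- Let 𝐊 ⊆ 𝐋 ⊆ 𝐇 be algebraic (possibly infinite-degree) extensions of ℚ. (1) If the image of 𝒪_𝐊 in 𝒪_𝐋 has a diophantine definition over 𝒪_𝐋, and the image of 𝒪_𝐋 in 𝒪_𝐇 has a diophantine definition over 𝒪_𝐇, then the image of 𝒪_𝐊 in 𝒪_𝐇 has a diophantine definition over 𝒪_𝐇. (2) If 𝐇/𝐋 is a finite extension and the image of 𝒪_𝐊 in 𝒪_𝐇 has a diophantine definition over 𝒪_𝐇, then the image of 𝒪_𝐊 in 𝒪_𝐋 has a diophantine definition over 𝒪_𝐋. -/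

import Mathlib

/-- A subset `E` of a commutative ring `R` has a diophantine definition over `R` if there is a
finite system of polynomials `f₁, …, f_k ∈ R[t, x₁, …, x_n]` such that `τ ∈ E` iff the system
`fᵢ(τ, a₁, …, a_n) = 0` has a solution `a₁, …, a_n ∈ R`. -/
def IsDiophantineOver (R : Type*) [CommRing R] (E : Set R) : Prop :=
  ∃ (n k : ℕ) (f : Fin k → MvPolynomial (Fin (n + 1)) R),
    ∀ τ : R, τ ∈ E ↔ ∃ a : Fin n → R, ∀ i, MvPolynomial.eval (Fin.cons τ a) (f i) = 0


open MvPolynomial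

lemma eval_map_comp' {R S σ : Type*} [CommRing R] [CommRing S] (φ : R →+* S)
    (v : σ → R) (p : MvPolynomial σ R) :
    MvPolynomial.eval (fun s => φ (v s)) (MvPolynomial.map φ p) = φ (MvPolynomial.eval v p) := by
  rw [eval_map]
  have : (MvPolynomial.eval v) p = eval₂ (RingHom.id R) v p := rfl
  rw [this, eval₂_comp_left φ (RingHom.id R) v p]
  rfl

/-- Flexible characterization of diophantine sets with arbitrary finite index types. -/
lemma isDiophantineOver_iff_flex {R : Type*} [CommRing R] (E : Set R) :
    IsDiophantineOver R E ↔
      ∃ (ν κ : Type) (_ : Fintype ν) (_ : Fintype κ) (f : κ → MvPolynomial (Option ν) R),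
        ∀ τ : R, τ ∈ E ↔ ∃ a : ν → R, ∀ i,
          MvPolynomial.eval (fun o => Option.elim o τ a) (f i) = 0 := by
  constructor
  · rintro ⟨n, k, f, hf⟩
    refine ⟨Fin n, Fin k, inferInstance, inferInstance,
      fun i => rename (finSuccEquiv n) (f i), fun τ => (hf τ).trans ?_⟩
    apply exists_congr; intro a
    apply forall_congr'; intro i
    rw [eval_rename]
    have h2 : ((fun o : Option (Fin n) => Option.elim o τ a) ∘ ⇑(_root_.finSuccEquiv n))
        = Fin.cons τ a := by
      funext x
      induction x using Fin.cases with
      | zero => simp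
      | succ j => simp
    rw [h2]
  · rintro ⟨ν, κ, _, _, f, hf⟩
    refine ⟨Fintype.card ν, Fintype.card κ,
      fun i => rename (fun o : Option ν =>
        (finSuccEquiv (Fintype.card ν)).symm (Option.map (Fintype.equivFin ν) o))
        (f ((Fintype.equivFin κ).symm i)), fun τ => (hf τ).trans ?_⟩
    constructor
    · rintro ⟨a, ha⟩
      refine ⟨a ∘ (Fintype.equivFin ν).symm, fun i => ?_⟩
      rw [eval_rename]
      have h2 : (Fin.cons τ (a ∘ (Fintype.equivFin ν).symm) ∘ fun o : Option ν =>
          (finSuccEquiv (Fintype.card ν)).symm (Option.map (Fintype.equivFin ν) o))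
          = fun o => Option.elim o τ a := by
        funext o
        cases o with
        | none => simp
        | some v => simp
      rw [h2]; exact ha _
    · rintro ⟨a, ha⟩
      refine ⟨fun v => a ((Fintype.equivFin ν) v), fun i => ?_⟩
      have := ha ((Fintype.equivFin κ) i)
      simp only [Equiv.symm_apply_apply, eval_rename] at this
      have h2 : (Fin.cons τ a ∘ fun o : Option ν =>
          (_root_.finSuccEquiv (Fintype.card ν)).symm (Option.map (⇑(Fintype.equivFin ν)) o))
          = fun o => Option.elim o τ (fun v => a ((Fintype.equivFin ν) v)) := by
        funext o
        cases o with
        | none => simp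
        | some v => simp
      rw [h2] at this
      exact this

/-- Going up: image of a diophantine set under an injective ring hom with diophantine range. -/
lemma part1_abstract {R S : Type*} [CommRing R] [CommRing S] (φ : R →+* S)
    (hφ : Function.Injective φ) (E : Set R) (hE : IsDiophantineOver R E)
    (hrange : IsDiophantineOver S (Set.range φ)) :
    IsDiophantineOver S (φ '' E) := by
  rw [isDiophantineOver_iff_flex] at hE hrange ⊢
  obtain ⟨νL, κL, _, _, fL, hfL⟩ := hE
  obtain ⟨νH, κH, _, _, fH, hfH⟩ := hrange
  classical
  refine ⟨νL ⊕ (Option νL × νH), κL ⊕ (Option νL × κH), inferInstance, inferInstance,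
    Sum.elim (fun i => rename (Option.map Sum.inl) (map φ (fL i)))
      (fun c => rename (fun x : Option νH =>
          Option.elim x (Option.map Sum.inl c.1) (fun j => some (Sum.inr (c.1, j)))) (fH c.2)),
    fun τ => ?_⟩
  constructor
  · rintro ⟨τ₀, hτ₀E, rfl⟩
    obtain ⟨aL, haL⟩ := (hfL τ₀).mp hτ₀E
    have hw : ∀ o : Option νL, ∃ w : νH → S, ∀ i,
        MvPolynomial.eval (fun x => Option.elim x (φ (Option.elim o τ₀ aL)) w) (fH i) = 0 :=
      fun o => (hfH (φ (Option.elim o τ₀ aL))).mp ⟨Option.elim o τ₀ aL, rfl⟩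
    choose w hwspec using hw
    refine ⟨Sum.elim (fun v => φ (aL v)) (fun c => w c.1 c.2), fun c => ?_⟩
    cases c with
    | inl i =>
      simp only [Sum.elim_inl, eval_rename]
      have h2 : ((fun o : Option (νL ⊕ (Option νL × νH)) =>
          Option.elim o (φ τ₀) (Sum.elim (fun v => φ (aL v)) (fun c => w c.1 c.2)))
          ∘ Option.map Sum.inl) = fun o : Option νL => φ (Option.elim o τ₀ aL) := by
        funext o; cases o <;> simp
      rw [h2, eval_map_comp' φ _ (fL i), haL i, map_zero]
    | inr c =>
      simp only [Sum.elim_inr, eval_rename]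
      have h2 : ((fun o : Option (νL ⊕ (Option νL × νH)) =>
          Option.elim o (φ τ₀) (Sum.elim (fun v => φ (aL v)) (fun d => w d.1 d.2)))
          ∘ (fun x : Option νH =>
            Option.elim x (Option.map Sum.inl c.1) (fun j => some (Sum.inr (c.1, j)))))
          = fun x => Option.elim x (φ (Option.elim c.1 τ₀ aL)) (w c.1) := by
        funext x; cases x with
        | none => cases c.1 <;> simp
        | some j => simp
      rw [h2]
      exact hwspec c.1 c.2
  · rintro ⟨a, ha⟩
    set A : Option νL → S := fun o => Option.elim o τ (fun v => a (Sum.inl v)) with hA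
    have hrange' : ∀ o : Option νL, A o ∈ Set.range φ := by
      intro o
      rw [hfH]
      refine ⟨fun j => a (Sum.inr (o, j)), fun i => ?_⟩
      have := ha (Sum.inr (o, i))
      simp only [Sum.elim_inr, eval_rename] at this
      have h2 : ((fun o' : Option (νL ⊕ (Option νL × νH)) => Option.elim o' τ a)
          ∘ (fun x : Option νH =>
            Option.elim x (Option.map Sum.inl o) (fun j => some (Sum.inr (o, j)))))
          = fun x => Option.elim x (A o) (fun j => a (Sum.inr (o, j))) := by
        funext x; cases x with
        | none => cases o <;> simp [hA]
        | some j => simp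
      rwa [h2] at this
    choose pre hpre using hrange'
    have hkey : ∀ i, MvPolynomial.eval (fun o => Option.elim o (pre none) (fun v => pre (some v)))
        (fL i) = 0 := by
      intro i
      have := ha (Sum.inl i)
      simp only [Sum.elim_inl, eval_rename] at this
      have h2 : ((fun o' : Option (νL ⊕ (Option νL × νH)) => Option.elim o' τ a)
          ∘ Option.map Sum.inl) = fun o : Option νL => φ (pre o) := by
        funext o; cases o with
        | none => simpa [hA] using (hpre none).symm
        | some v => simpa [hA] using (hpre (some v)).symm
      rw [h2, eval_map_comp' φ _ (fL i)] at this
      apply hφ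
      rw [map_zero]
      have hpre2 : (fun o : Option νL => Option.elim o (pre none) fun v => pre (some v)) = pre := by
        funext o; cases o <;> rfl
      rw [hpre2]
      exact this
    refine ⟨pre none, ?_, ?_⟩
    · rw [hfL]
      exact ⟨fun v => pre (some v), hkey⟩
    · simpa [hA] using hpre none

/-- Coordinate reduction over a basis. -/
lemma coordReduce {L H : Type*} [Field L] [CharZero L] [Field H] [Algebra L H]
    {m : ℕ} (b : Module.Basis (Fin m) L H)
    (hd : ∀ c : L, ∃ N : ℤ, N ≠ 0 ∧ IsIntegral ℤ (N • c))
    {ι : Type} (Q : MvPolynomial ι H) :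
    ∃ g : Fin m → MvPolynomial ι (integralClosure ℤ L),
      ∀ w : ι → integralClosure ℤ L,
        (MvPolynomial.eval (fun x => algebraMap L H ((w x : L))) Q = 0 ↔
          ∀ r, MvPolynomial.eval w (g r) = 0) := by
  classical
  set c : Fin m → (ι →₀ ℕ) → L := fun r s => b.repr (Q.coeff s) r with hc
  choose d hd0 hdint using fun (p : Fin m × (ι →₀ ℕ)) => hd (c p.1 p.2)
  set T : Finset (Fin m × (ι →₀ ℕ)) := Finset.univ ×ˢ Q.support with hT
  set N : ℤ := ∏ p ∈ T, d p with hN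
  have hN0 : N ≠ 0 := Finset.prod_ne_zero_iff.mpr fun p _ => hd0 p
  have hint : ∀ (r : Fin m) (s : ι →₀ ℕ), s ∈ Q.support →
      (N • c r s) ∈ integralClosure ℤ L := by
    intro r s hs
    have hmem : (r, s) ∈ T := by simp [hT, hs]
    have : N = (∏ p ∈ T.erase (r, s), d p) * d (r, s) := by
      rw [hN, mul_comm, Finset.mul_prod_erase T d hmem]
    rw [this, mul_smul]
    have h1 : IsIntegral ℤ ((∏ p ∈ T.erase (r, s), d p : ℤ) • (d (r, s) • c r s)) := by
      rw [zsmul_eq_mul]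
      refine IsIntegral.mul ?_ (hdint (r, s))
      have : ((∏ p ∈ T.erase (r, s), d p : ℤ) : L)
          = algebraMap ℤ L (∏ p ∈ T.erase (r, s), d p) := by
        simp [algebraMap_int_eq]
      rw [this]
      exact isIntegral_algebraMap
    exact h1
  set g : Fin m → MvPolynomial ι (integralClosure ℤ L) := fun r =>
    ∑ s ∈ Q.support.attach, MvPolynomial.monomial s.1 (⟨N • c r s.1, hint r s.1 s.2⟩ :
      integralClosure ℤ L) with hg
  refine ⟨g, fun w => ?_⟩
  set v : ι → L := fun x => ((w x : L)) with hv
  set vH : ι → H := fun x => algebraMap L H (v x) with hvH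
  -- Step A
  have stepA : ∀ r, ((MvPolynomial.eval w (g r) : integralClosure ℤ L) : L)
      = ∑ s ∈ Q.support, (N • c r s) * (s.prod fun n e => v n ^ e) := by
    intro r
    rw [hg]
    rw [MvPolynomial.eval_sum]
    rw [← Finset.sum_attach Q.support (fun s => (N • c r s) * (s.prod fun n e => v n ^ e))]
    push_cast
    apply Finset.sum_congr rfl
    intro s _
    rw [eval_monomial]
    push_cast
    congr 1
    rw [Finsupp.prod, Finsupp.prod]
    push_cast
    rfl
  -- Step B
  have stepB : ∀ r, b.repr (MvPolynomial.eval vH Q) r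
      = ∑ s ∈ Q.support, (c r s) * (s.prod fun n e => v n ^ e) := by
    intro r
    rw [eval_eq, map_sum, Finsupp.finset_sum_apply]
    apply Finset.sum_congr rfl
    intro s _
    have h1 : (∏ i ∈ s.support, vH i ^ s i) = algebraMap L H (∏ i ∈ s.support, v i ^ s i) := by
      rw [map_prod]
      apply Finset.prod_congr rfl
      intro i _
      rw [map_pow]
    have h2 : MvPolynomial.coeff s Q * ∏ i ∈ s.support, vH i ^ s i
        = (∏ i ∈ s.support, v i ^ s i) • MvPolynomial.coeff s Q := by
      rw [h1, Algebra.smul_def, mul_comm]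
    rw [h2, map_smul, Finsupp.smul_apply, smul_eq_mul, mul_comm]
    rfl
  -- combine
  have stepC : ∀ r, ((MvPolynomial.eval w (g r) : integralClosure ℤ L) : L)
      = N • (b.repr (MvPolynomial.eval vH Q) r) := by
    intro r
    rw [stepA r, stepB r, Finset.smul_sum]
    apply Finset.sum_congr rfl
    intro s _
    rw [smul_mul_assoc]
  constructor
  · intro h r
    have : ((MvPolynomial.eval w (g r) : integralClosure ℤ L) : L) = 0 := by
      rw [stepC r, h, map_zero, Finsupp.coe_zero, Pi.zero_apply, smul_zero]
    exact_mod_cast this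
  · intro h
    have hrep : ∀ r, b.repr (MvPolynomial.eval vH Q) r = 0 := by
      intro r
      have h0 : ((MvPolynomial.eval w (g r) : integralClosure ℤ L) : L) = 0 := by
        exact_mod_cast congrArg (Subtype.val) (h r)
      rw [stepC r] at h0
      rcases smul_eq_zero.mp h0 with h1 | h1
      · exact absurd h1 hN0
      · exact h1
    have : b.repr (MvPolynomial.eval vH Q) = 0 := by
      ext r; simpa using hrep r
    exact b.repr.map_eq_zero_iff.mp this

/-- The natural map between rings of integers induced by a field embedding. -/
def icMap (L H : Type*) [Field L] [Field H] [Algebra L H] :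
    integralClosure ℤ L →+* integralClosure ℤ H where
  toFun x := ⟨algebraMap L H x, IsIntegral.map (algebraMap L H).toIntAlgHom x.2⟩
  map_one' := by ext : 1; simp
  map_mul' x y := by ext : 1; simp
  map_zero' := by ext : 1; simp
  map_add' x y := by ext : 1; simp

@[simp] lemma icMap_coe {L H : Type*} [Field L] [Field H] [Algebra L H]
    (x : integralClosure ℤ L) : (icMap L H x : H) = algebraMap L H (x : L) := rfl

lemma icMap_injective {L H : Type*} [Field L] [Field H] [Algebra L H] :
    Function.Injective (icMap L H) := by
  intro x y h
  ext : 1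
  exact (algebraMap L H).injective (congrArg Subtype.val h)

@[simp] lemma algebraMap_IC_coe {H : Type*} [Field H] (x : integralClosure ℤ H) :
    algebraMap (integralClosure ℤ H) H x = (x : H) := rfl

lemma aeval_eq_eval' {H σ : Type*} [CommRing H] (v : σ → H) (p : MvPolynomial σ H) :
    MvPolynomial.aeval (R := H) v p = MvPolynomial.eval v p := by
  rw [MvPolynomial.aeval_def, Algebra.algebraMap_self]
  rfl

lemma eval_bind₁' {H σ τ : Type*} [CommRing H] (v : τ → H) (G : σ → MvPolynomial τ H)
    (p : MvPolynomial σ H) :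
    MvPolynomial.eval v (MvPolynomial.bind₁ G p)
      = MvPolynomial.eval (fun s => MvPolynomial.eval v (G s)) p := by
  rw [← aeval_eq_eval' v, aeval_bind₁]
  simp only [aeval_eq_eval']

/-- Going down along a finite extension. -/
lemma part2_abstract {L H : Type*} [Field L] [Field H] [CharZero L] [Algebra L H]
    {m : ℕ} (hm : 0 < m) (b : Module.Basis (Fin m) L H)
    (hd : ∀ c : L, ∃ N : ℤ, N ≠ 0 ∧ IsIntegral ℤ (N • c))
    (ω : Fin m → integralClosure ℤ H) (Dl : integralClosure ℤ L) (hDl : (Dl : L) ≠ 0)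
    (hH1 : ∀ x : integralClosure ℤ H, ∃ z : Fin m → integralClosure ℤ L,
      icMap L H Dl * x = ∑ i, icMap L H (z i) * ω i)
    (hH2 : ∀ x : integralClosure ℤ H, ∃ u : Fin m → integralClosure ℤ L,
      x ^ m + ∑ i : Fin m, icMap L H (u i) * x ^ (i : ℕ) = 0)
    (E : Set (integralClosure ℤ H)) (hE : IsDiophantineOver (integralClosure ℤ H) E) :
    IsDiophantineOver (integralClosure ℤ L) {τ | icMap L H τ ∈ E} := by
  classical
  obtain ⟨n, k, f, hf⟩ := hE
  set DH : H := algebraMap L H (Dl : L) with hDH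
  have hDH0 : DH ≠ 0 := by
    rw [hDH]
    intro h
    exact hDl ((map_eq_zero _).mp h)
  set ν : Type := (Fin n × Fin m) ⊕ (Fin n × Fin m) with hν
  set Apoly : Fin n → MvPolynomial (Option ν) H := fun j =>
    MvPolynomial.C DH⁻¹ * ∑ i : Fin m,
      MvPolynomial.C ((ω i : H)) * MvPolynomial.X (some (Sum.inl (j, i))) with hApoly
  set Ppoly : Fin n → MvPolynomial (Option ν) H := fun j =>
    (Apoly j) ^ m + ∑ i : Fin m,
      MvPolynomial.X (some (Sum.inr (j, i))) * (Apoly j) ^ (i : ℕ) with hPpoly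
  set Fpoly : Fin k → MvPolynomial (Option ν) H := fun i =>
    MvPolynomial.bind₁ (Fin.cons (MvPolynomial.X none) Apoly)
      (MvPolynomial.map (algebraMap (integralClosure ℤ H) H) (f i)) with hFpoly
  choose gP hgP using fun j => coordReduce b hd (Ppoly j)
  choose gF hgF using fun i => coordReduce b hd (Fpoly i)
  rw [isDiophantineOver_iff_flex]
  refine ⟨ν, (Fin n ⊕ Fin k) × Fin m, inferInstance, inferInstance,
    fun c => (Sum.elim gP gF c.1) c.2, fun τ => ?_⟩
  set vHfun : (ν → integralClosure ℤ L) → Option ν → H := fun a o =>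
    algebraMap L H (((Option.elim o τ a : integralClosure ℤ L) : L)) with hvHfun
  -- evaluation of the A-polynomials
  have evalA : ∀ (a : ν → integralClosure ℤ L) (j : Fin n),
      MvPolynomial.eval (vHfun a) (Apoly j)
      = DH⁻¹ * ∑ i : Fin m, (ω i : H) * algebraMap L H ((a (Sum.inl (j, i)) : L)) := by
    intro a j
    rw [hApoly]
    simp only [map_mul, MvPolynomial.eval_C, MvPolynomial.eval_sum, MvPolynomial.eval_X]
    simp [hvHfun]
  -- evaluation of the P-polynomials
  have evalP : ∀ (a : ν → integralClosure ℤ L) (j : Fin n),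
      MvPolynomial.eval (vHfun a) (Ppoly j)
      = (MvPolynomial.eval (vHfun a) (Apoly j)) ^ m
        + ∑ i : Fin m, algebraMap L H ((a (Sum.inr (j, i)) : L))
            * (MvPolynomial.eval (vHfun a) (Apoly j)) ^ (i : ℕ) := by
    intro a j
    rw [hPpoly]
    simp only [map_add, map_pow, MvPolynomial.eval_sum, map_mul, MvPolynomial.eval_X]
    simp [hvHfun]
  -- evaluation of the F-polynomials
  have evalF : ∀ (a : ν → integralClosure ℤ L) (av : Fin n → integralClosure ℤ H),
      (∀ j, MvPolynomial.eval (vHfun a) (Apoly j) = (av j : H)) → ∀ i,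
      MvPolynomial.eval (vHfun a) (Fpoly i)
        = ((MvPolynomial.eval (Fin.cons (icMap L H τ) av) (f i) : integralClosure ℤ H) : H) := by
    intro a av hA i
    rw [hFpoly, eval_bind₁']
    have hpt : (fun s : Fin (n + 1) =>
        MvPolynomial.eval (vHfun a) ((Fin.cons (MvPolynomial.X none) Apoly : Fin (n+1) → MvPolynomial (Option ν) H) s))
        = fun s => algebraMap (integralClosure ℤ H) H ((Fin.cons (icMap L H τ) av : Fin (n+1) → integralClosure ℤ H) s) := by
      funext s
      induction s using Fin.cases with
      | zero => simp [hvHfun, algebraMap_IC_coe]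
      | succ j => simp [hA j, algebraMap_IC_coe]
    rw [hpt, eval_map_comp' (algebraMap (integralClosure ℤ H) H) _ (f i)]
    rfl
  constructor
  · -- forward direction
    intro hτE
    obtain ⟨av, hav⟩ := (hf (icMap L H τ)).mp hτE
    choose z hz using fun j => hH1 (av j)
    choose u hu using fun j => hH2 (av j)
    refine ⟨Sum.elim (fun p => z p.1 p.2) (fun p => u p.1 p.2), ?_⟩
    set a : ν → integralClosure ℤ L :=
      Sum.elim (fun p => z p.1 p.2) (fun p => u p.1 p.2) with ha
    have hA : ∀ j, MvPolynomial.eval (vHfun a) (Apoly j) = (av j : H) := by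
      intro j
      rw [evalA a j]
      have h1 : ∀ i : Fin m, (ω i : H) * algebraMap L H ((a (Sum.inl (j, i)) : L))
          = algebraMap L H ((z j i : L)) * (ω i : H) := by
        intro i; rw [mul_comm]; rfl
      rw [Finset.sum_congr rfl (fun i _ => h1 i)]
      have hcoe : (∑ i : Fin m, algebraMap L H ((z j i : L)) * (ω i : H))
          = DH * (av j : H) := by
        have h2 := congrArg Subtype.val (hz j)
        simp only [MulMemClass.coe_mul, AddSubmonoidClass.coe_finset_sum, icMap_coe] at h2
        rw [hDH, ← h2]
      rw [hcoe, inv_mul_cancel_left₀ hDH0]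
    have hP0 : ∀ j, MvPolynomial.eval (vHfun a) (Ppoly j) = 0 := by
      intro j
      rw [evalP a j, hA j]
      have h2 := congrArg Subtype.val (hu j)
      simp only [AddMemClass.coe_add, MulMemClass.coe_mul, AddSubmonoidClass.coe_finset_sum,
        SubmonoidClass.coe_pow, icMap_coe, ZeroMemClass.coe_zero] at h2
      exact h2
    have hF0 : ∀ i, MvPolynomial.eval (vHfun a) (Fpoly i) = 0 := by
      intro i
      rw [evalF a av hA i, hav i, ZeroMemClass.coe_zero]
    rintro ⟨c1, r⟩
    cases c1 with
    | inl j => exact (hgP j (fun o => Option.elim o τ a)).mp (hP0 j) r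
    | inr i => exact (hgF i (fun o => Option.elim o τ a)).mp (hF0 i) r
  · -- backward direction
    rintro ⟨a, ha⟩
    have hP0 : ∀ j, MvPolynomial.eval (vHfun a) (Ppoly j) = 0 :=
      fun j => (hgP j (fun o => Option.elim o τ a)).mpr (fun r => ha (Sum.inl j, r))
    have hF0 : ∀ i, MvPolynomial.eval (vHfun a) (Fpoly i) = 0 :=
      fun i => (hgF i (fun o => Option.elim o τ a)).mpr (fun r => ha (Sum.inr i, r))
    have hint : ∀ j, IsIntegral ℤ (MvPolynomial.eval (vHfun a) (Apoly j)) := by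
      intro j
      set A : H := MvPolynomial.eval (vHfun a) (Apoly j) with hAdef
      set q : Polynomial (integralClosure ℤ H) := ∑ i : Fin m,
        Polynomial.C (icMap L H (a (Sum.inr (j, i)))) * Polynomial.X ^ (i : ℕ) with hq
      have hdeg : q.degree < (m : ℕ) := by
        rw [hq]
        refine lt_of_le_of_lt (Polynomial.degree_sum_le _ _) ?_
        rw [Finset.sup_lt_iff (by exact_mod_cast WithBot.bot_lt_coe m)]
        intro i _
        refine lt_of_le_of_lt (Polynomial.degree_C_mul_X_pow_le _ _) ?_
        exact_mod_cast i.2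
      have hmonic : (Polynomial.X ^ m + q).Monic := Polynomial.monic_X_pow_add hdeg
      have haeval : Polynomial.eval₂ (algebraMap (integralClosure ℤ H) H) A
          (Polynomial.X ^ m + q) = 0 := by
        have hcomp : Polynomial.eval₂ (algebraMap (integralClosure ℤ H) H) A
            (Polynomial.X ^ m + q)
            = A ^ m + ∑ i : Fin m,
                algebraMap L H ((a (Sum.inr (j, i)) : L)) * A ^ (i : ℕ) := by
          rw [hq]
          simp [Polynomial.eval₂_add, Polynomial.eval₂_pow, Polynomial.eval₂_finset_sum,
            algebraMap_IC_coe]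
        rw [hcomp, ← evalP a j, hP0 j]
      have hIC : IsIntegral (integralClosure ℤ H) A := ⟨Polynomial.X ^ m + q, hmonic, haeval⟩
      have : Algebra.IsIntegral ℤ (integralClosure ℤ H) :=
        IsIntegralClosure.isIntegral_algebra ℤ H
      exact isIntegral_trans A hIC
    set av : Fin n → integralClosure ℤ H := fun j => ⟨MvPolynomial.eval (vHfun a) (Apoly j),
      hint j⟩ with hav
    have hA : ∀ j, MvPolynomial.eval (vHfun a) (Apoly j) = (av j : H) := fun j => rfl
    have hfe : ∀ i, MvPolynomial.eval (Fin.cons (icMap L H τ) av) (f i) = 0 := by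
      intro i
      have := evalF a av hA i
      rw [hF0 i] at this
      exact_mod_cast this.symm
    exact (hf (icMap L H τ)).mpr ⟨av, hfe⟩

lemma exists_int_smul_integral (F : Type*) [Field F] [CharZero F] [Algebra.IsAlgebraic ℚ F]
    (c : F) : ∃ N : ℤ, N ≠ 0 ∧ IsIntegral ℤ (N • c) := by
  have halg : IsAlgebraic ℤ c :=
    (IsFractionRing.isAlgebraic_iff ℤ ℚ F).mpr (Algebra.IsAlgebraic.isAlgebraic c)
  obtain ⟨y, hy, hxy⟩ := IsAlgebraic.exists_integral_multiple halg
  refine ⟨y, hy, ?_⟩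
  exact hxy

set_option maxHeartbeats 1000000 in
lemma part2_main {L H : Type*} [Field L] [Field H] [CharZero L] [CharZero H]
    [Algebra.IsAlgebraic ℚ L] [Algebra.IsAlgebraic ℚ H] [Algebra L H] [FiniteDimensional L H]
    (E : Set (integralClosure ℤ H)) (hE : IsDiophantineOver (integralClosure ℤ H) E) :
    IsDiophantineOver (integralClosure ℤ L) {τ | icMap L H τ ∈ E} := by
  classical
  -- instances
  haveI : Algebra.IsAlgebraic ℤ L :=
    ⟨fun x => (IsFractionRing.isAlgebraic_iff ℤ ℚ L).mpr (Algebra.IsAlgebraic.isAlgebraic x)⟩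
  haveI hFR : IsFractionRing (integralClosure ℤ L) L :=
    integralClosure.isFractionRing_of_algebraic (A := ℤ) (fun a ha => by simpa using ha)
  haveI hIC : IsIntegrallyClosed (integralClosure ℤ L) := by
    rw [isIntegrallyClosed_iff_isIntegrallyClosedIn L]
    exact IsIntegrallyClosedIn.of_isIntegralClosure (R := ℤ)
  haveI : Algebra.IsAlgebraic L H := Algebra.IsAlgebraic.of_finite L H
  -- a primitive element which is an algebraic integer
  obtain ⟨α, hα⟩ := Field.exists_primitive_element L H
  obtain ⟨dα, hdα0, hdαint⟩ := exists_int_smul_integral H α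
  set β : H := dα • α with hβ
  have hβZ : IsIntegral ℤ β := hdαint
  have hβtop : IntermediateField.adjoin L {β} = ⊤ := by
    have hdL : ((dα : L)) ≠ 0 := Int.cast_ne_zero.mpr hdα0
    have hαmem : α ∈ IntermediateField.adjoin L {β} := by
      have hβmem : β ∈ IntermediateField.adjoin L {β} :=
        IntermediateField.mem_adjoin_simple_self L β
      have hα' : α = ((dα : L))⁻¹ • β := by
        rw [hβ, ← Int.cast_smul_eq_zsmul L dα α, inv_smul_smul₀ hdL]
      rw [hα']
      exact (IntermediateField.adjoin L {β}).smul_mem hβmem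
    have hle : IntermediateField.adjoin L {α} ≤ IntermediateField.adjoin L {β} :=
      IntermediateField.adjoin_simple_le_iff.mpr hαmem
    exact eq_top_iff.mpr (hα ▸ hle)
  have hβL : IsIntegral L β := Algebra.IsIntegral.isIntegral β
  -- power basis of H over L with integral generator
  set B : PowerBasis L H := (IntermediateField.adjoin.powerBasis hβL).map
    ((IntermediateField.equivOfEq hβtop).trans IntermediateField.topEquiv) with hB
  have hgen : B.gen = β := by
    rw [hB]
    simp [PowerBasis.map_gen]
  have hβOL : IsIntegral (integralClosure ℤ L) β := IsIntegral.tower_top hβZ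
  have hgenOL : IsIntegral (integralClosure ℤ L) B.gen := by rw [hgen]; exact hβOL
  -- the discriminant
  set D : L := Algebra.discr L B.basis with hD
  have hD0 : D ≠ 0 := by
    rw [hD]
    exact Algebra.discr_not_zero_of_basis L B.basis
  have hDint : IsIntegral ℤ D := by
    rw [hD]
    refine Algebra.discr_isIntegral L (fun i => ?_)
    rw [B.basis_eq_pow i, hgen]
    exact hβZ.pow _
  set Dl : integralClosure ℤ L := ⟨D, hDint⟩ with hDl
  have hDl0 : (Dl : L) ≠ 0 := hD0
  -- the power "basis" elements as algebraic integers
  set ω : Fin B.dim → integralClosure ℤ H := fun i => ⟨β ^ (i : ℕ), hβZ.pow _⟩ with hω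
  -- degree of the minimal polynomial over the ring of integers
  have hminmap : minpoly L B.gen
      = Polynomial.map (algebraMap (integralClosure ℤ L) L) (minpoly (integralClosure ℤ L) B.gen) :=
    minpoly.isIntegrallyClosed_eq_field_fractions' L hgenOL
  have hmindeg : (minpoly (integralClosure ℤ L) B.gen).natDegree = B.dim := by
    have h1 : (minpoly L B.gen).natDegree = B.dim := B.natDegree_minpoly
    rw [hminmap, Polynomial.natDegree_map_eq_of_injective
      (IsFractionRing.injective (integralClosure ℤ L) L)] at h1
    exact h1
  -- H1 : uniform denominators
  have hH1 : ∀ x : integralClosure ℤ H, ∃ z : Fin B.dim → integralClosure ℤ L,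
      icMap L H Dl * x = ∑ i, icMap L H (z i) * ω i := by
    intro x
    have hxOL : IsIntegral (integralClosure ℤ L) (x : H) := IsIntegral.tower_top x.2
    have hadj : D • (x : H) ∈ Algebra.adjoin (integralClosure ℤ L) {B.gen} := by
      have := Algebra.discr_mul_isIntegral_mem_adjoin L (R := integralClosure ℤ L)
        (B := B) hgenOL hxOL
      rwa [← hD] at this
    rw [Algebra.adjoin_singleton_eq_range_aeval] at hadj
    obtain ⟨p, hp⟩ := hadj
    set μ : Polynomial (integralClosure ℤ L) := minpoly (integralClosure ℤ L) B.gen with hμ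
    have hμmonic : μ.Monic := minpoly.monic hgenOL
    set r : Polynomial (integralClosure ℤ L) := p %ₘ μ with hr
    have haevalr : Polynomial.aeval B.gen r = D • (x : H) := by
      rw [hr, Polynomial.modByMonic_eq_sub_mul_div p μ, map_sub, map_mul,
        minpoly.aeval, zero_mul, sub_zero]
      exact hp
    have hrdeg : r.natDegree < B.dim := by
      rcases eq_or_ne r 0 with h0 | h0
      · rw [h0, Polynomial.natDegree_zero]
        exact B.dim_pos
      · rw [← hmindeg]
        exact Polynomial.natDegree_lt_natDegree h0 (Polynomial.degree_modByMonic_lt p hμmonic)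
    refine ⟨fun i : Fin B.dim => r.coeff (i : ℕ), ?_⟩
    apply Subtype.ext
    have hsum := Polynomial.aeval_eq_sum_range' (S := H) hrdeg B.gen
    rw [haevalr] at hsum
    have hLHS : ((icMap L H Dl * x : integralClosure ℤ H) : H) = D • (x : H) := by
      simp only [MulMemClass.coe_mul, icMap_coe]
      rw [Algebra.smul_def]
    have hRHS : ((∑ i : Fin B.dim, icMap L H (r.coeff (i : ℕ)) * ω i : integralClosure ℤ H) : H)
        = ∑ i : Fin B.dim, (r.coeff (i : ℕ)) • B.gen ^ (i : ℕ) := by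
      simp only [AddSubmonoidClass.coe_finset_sum, MulMemClass.coe_mul, icMap_coe]
      apply Finset.sum_congr rfl
      intro i _
      rw [Algebra.smul_def, hgen]
      rfl
    rw [hLHS, hRHS, hsum, ← Fin.sum_univ_eq_sum_range (fun i => r.coeff i • B.gen ^ i) B.dim]
  -- H2 : monic equations of uniform degree
  have hH2 : ∀ x : integralClosure ℤ H, ∃ u : Fin B.dim → integralClosure ℤ L,
      x ^ B.dim + ∑ i : Fin B.dim, icMap L H (u i) * x ^ (i : ℕ) = 0 := by
    intro x
    have hxOL : IsIntegral (integralClosure ℤ L) (x : H) := IsIntegral.tower_top x.2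
    have hxL : IsIntegral L (x : H) := Algebra.IsIntegral.isIntegral _
    set μx : Polynomial (integralClosure ℤ L) := minpoly (integralClosure ℤ L) (x : H) with hμx
    have hmapx : minpoly L (x : H)
        = Polynomial.map (algebraMap (integralClosure ℤ L) L) μx :=
      minpoly.isIntegrallyClosed_eq_field_fractions' L hxOL
    have hdx : μx.natDegree = (minpoly L ((x : H))).natDegree := by
      rw [hmapx, Polynomial.natDegree_map_eq_of_injective
        (IsFractionRing.injective (integralClosure ℤ L) L)]
    have hdvd : (minpoly L ((x : H))).natDegree ∣ B.dim := by
      have h1 : (minpoly L ((x : H))).natDegree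
          = Module.finrank L (IntermediateField.adjoin L {(x : H)}) :=
        (IntermediateField.adjoin.finrank hxL).symm
      have h2 : Module.finrank L (IntermediateField.adjoin L {(x : H)})
          * Module.finrank (IntermediateField.adjoin L {(x : H)}) H = Module.finrank L H :=
        Module.finrank_mul_finrank L _ H
      have h3 : B.dim = Module.finrank L H := B.finrank.symm
      exact ⟨Module.finrank (IntermediateField.adjoin L {(x : H)}) H, by rw [h3, ← h2, h1]⟩
    have he : (minpoly L ((x : H))).natDegree * (B.dim / (minpoly L ((x : H))).natDegree)
        = B.dim := Nat.mul_div_cancel' hdvd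
    set e : ℕ := B.dim / (minpoly L ((x : H))).natDegree with heq
    have he0 : e ≠ 0 := by
      intro h
      rw [h, mul_zero] at he
      have := B.dim_pos
      omega
    set P : Polynomial (integralClosure ℤ L) := μx ^ e with hP
    have hPmonic : P.Monic := (minpoly.monic hxOL).pow _
    have hPdeg : P.natDegree = B.dim := by
      rw [hP, Polynomial.natDegree_pow, hdx, Nat.mul_comm, he]
    have hPaeval : Polynomial.aeval ((x : H)) P = 0 := by
      rw [hP, map_pow, minpoly.aeval, zero_pow he0]
    have hsum := Polynomial.aeval_eq_sum_range (S := H) (p := P) ((x : H))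
    rw [hPaeval, hPdeg] at hsum
    rw [Finset.sum_range_succ] at hsum
    have hlead : P.coeff B.dim = 1 := by
      have := hPmonic.coeff_natDegree
      rwa [hPdeg] at this
    rw [hlead, one_smul] at hsum
    refine ⟨fun i : Fin B.dim => P.coeff (i : ℕ), ?_⟩
    apply Subtype.ext
    have : ((x ^ B.dim + ∑ i : Fin B.dim, icMap L H (P.coeff i) * x ^ (i : ℕ) :
        integralClosure ℤ H) : H)
        = (x : H) ^ B.dim + ∑ i : Fin B.dim, (P.coeff i) • (x : H) ^ (i : ℕ) := by
      simp only [AddMemClass.coe_add, AddSubmonoidClass.coe_finset_sum, SubmonoidClass.coe_pow,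
        MulMemClass.coe_mul, icMap_coe]
      congr 1
      apply Finset.sum_congr rfl
      intro i _
      rw [Algebra.smul_def]
      rfl
    rw [this, Fin.sum_univ_eq_sum_range (fun i => P.coeff i • (x : H) ^ i) B.dim]
    rw [ZeroMemClass.coe_zero]
    rw [add_comm]
    exact hsum.symm
  exact part2_abstract B.dim_pos B.basis (exists_int_smul_integral L) ω Dl hDl0 hH1 hH2 E hE

/-- Transitivity and descent for diophantine definitions.  Let
`𝐊 ⊆ 𝐋 ⊆ 𝐇` be algebraic (possibly infinite) extensions of `ℚ`.
(1) If the image of `𝒪_𝐊` in `𝒪_𝐋` is diophantine over `𝒪_𝐋` and the image of `𝒪_𝐋` in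
`𝒪_𝐇` is diophantine over `𝒪_𝐇`, then the image of `𝒪_𝐊` in `𝒪_𝐇` is diophantine over
`𝒪_𝐇`.  (2) If `𝐇/𝐋` is finite and the image of `𝒪_𝐊` in `𝒪_𝐇` is diophantine over
`𝒪_𝐇`, then the image of `𝒪_𝐊` in `𝒪_𝐋` is diophantine over `𝒪_𝐋`. -/
theorem stmt_19 (K L H : Type*) [Field K] [Field L] [Field H]
    [CharZero K] [CharZero L] [CharZero H]
    [Algebra.IsAlgebraic ℚ K] [Algebra.IsAlgebraic ℚ L] [Algebra.IsAlgebraic ℚ H]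
    [Algebra K L] [Algebra L H] [Algebra K H] [IsScalarTower K L H] :
    ((IsDiophantineOver (integralClosure ℤ L)
        {x : integralClosure ℤ L | ∃ y : integralClosure ℤ K,
          algebraMap K L (y : K) = (x : L)} →
      IsDiophantineOver (integralClosure ℤ H)
        {x : integralClosure ℤ H | ∃ y : integralClosure ℤ L,
          algebraMap L H (y : L) = (x : H)} →
      IsDiophantineOver (integralClosure ℤ H)
        {x : integralClosure ℤ H | ∃ y : integralClosure ℤ K,
          algebraMap K H (y : K) = (x : H)})
    ∧ (FiniteDimensional L H →
      IsDiophantineOver (integralClosure ℤ H)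
        {x : integralClosure ℤ H | ∃ y : integralClosure ℤ K,
          algebraMap K H (y : K) = (x : H)} →
      IsDiophantineOver (integralClosure ℤ L)
        {x : integralClosure ℤ L | ∃ y : integralClosure ℤ K,
          algebraMap K L (y : K) = (x : L)})) := by
  constructor
  · intro h1 h2
    have hset1 : {x : integralClosure ℤ H | ∃ y : integralClosure ℤ L,
        algebraMap L H (y : L) = (x : H)} = Set.range (icMap L H) := by
      ext x
      constructor
      · rintro ⟨y, hy⟩
        exact ⟨y, Subtype.ext hy⟩
      · rintro ⟨y, rfl⟩
        exact ⟨y, rfl⟩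
    have hset2 : {x : integralClosure ℤ H | ∃ y : integralClosure ℤ K,
          algebraMap K H (y : K) = (x : H)}
        = icMap L H '' {x : integralClosure ℤ L | ∃ y : integralClosure ℤ K,
          algebraMap K L (y : K) = (x : L)} := by
      ext x
      constructor
      · rintro ⟨y, hy⟩
        refine ⟨⟨algebraMap K L (y : K), IsIntegral.map (algebraMap K L).toIntAlgHom y.2⟩,
          ⟨y, rfl⟩, ?_⟩
        apply Subtype.ext
        simp only [icMap_coe]
        rw [← IsScalarTower.algebraMap_apply K L H]
        exact hy
      · rintro ⟨z, ⟨y, hy⟩, rfl⟩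
        refine ⟨y, ?_⟩
        simp only [icMap_coe]
        rw [IsScalarTower.algebraMap_apply K L H, hy]
    rw [hset2]
    exact part1_abstract (icMap L H) icMap_injective _ h1 (hset1 ▸ h2)
  · intro hfin hE
    haveI := hfin
    have hset3 : {x : integralClosure ℤ L | ∃ y : integralClosure ℤ K,
          algebraMap K L (y : K) = (x : L)}
        = {τ | icMap L H τ ∈ {x : integralClosure ℤ H | ∃ y : integralClosure ℤ K,
            algebraMap K H (y : K) = (x : H)}} := by
      ext τ
      constructor
      · rintro ⟨y, hy⟩
        refine ⟨y, ?_⟩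
        show algebraMap K H (y : K) = ((icMap L H τ : integralClosure ℤ H) : H)
        rw [IsScalarTower.algebraMap_apply K L H, hy]
        rfl
      · rintro ⟨y, hy⟩
        refine ⟨y, ?_⟩
        apply (algebraMap L H).injective
        rw [← IsScalarTower.algebraMap_apply K L H]
        exact hy
    rw [hset3]
    exact part2_main _ hE
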